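/- Assume d₁ ∘ d₀ = 0 and that d₀ maps the orthogonal complement of V₀ (in W₀) into the orthogonal complement of V₁ (in W₁). Then the dimension of the kernel of the persistent sheaf Laplacian Δ equals dim(π(ker d₁)) − dim(range dᵗ), where π(ker d₁) is the image of ker d₁ under the orthogonal projection π : W₁ → V₁. (This is the paper's proposition that the nullity of Δ_q^{t,p} equals the dimension of the image of the induced map π• : H^q(X_{t+p}) → H^q(X_t) on sheaf cohomology, i.e. the persistent sheaf Betti number.) -/

import Mathlib

noncomputable section

open LinearMap RealInnerProductSpace

variable {W₀ W₁ W₂ : Type*}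
  [NormedAddCommGroup W₀] [InnerProductSpace ℝ W₀] [FiniteDimensional ℝ W₀]
  [NormedAddCommGroup W₁] [InnerProductSpace ℝ W₁] [FiniteDimensional ℝ W₁]
  [NormedAddCommGroup W₂] [InnerProductSpace ℝ W₂] [FiniteDimensional ℝ W₂]

/-- The compressed map `dᵗ : V₀ → V₁`, namely `π ∘ d₀` restricted to `V₀`, where
`π` is the orthogonal projection of `W₁` onto `V₁`. -/
def compressedMap (d₀ : W₀ →ₗ[ℝ] W₁) (V₀ : Submodule ℝ W₀) (V₁ : Submodule ℝ W₁) :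
    V₀ →ₗ[ℝ] V₁ :=
  (V₁.orthogonalProjectionOnto).toLinearMap ∘ₗ d₀ ∘ₗ V₀.subtype

/-- The subspace `𝔹 = {e ∈ W₂ : d₁†(e) ∈ V₁}` of `W₂`. -/
def sheafB (d₁ : W₁ →ₗ[ℝ] W₂) (V₁ : Submodule ℝ W₁) : Submodule ℝ W₂ :=
  V₁.comap (LinearMap.adjoint d₁)

/-- The map `L : 𝔹 → V₁` obtained by restricting `d₁†` to `𝔹`. -/
def sheafL (d₁ : W₁ →ₗ[ℝ] W₂) (V₁ : Submodule ℝ W₁) : sheafB d₁ V₁ →ₗ[ℝ] V₁ :=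
  (LinearMap.adjoint d₁).restrict (fun _ hx => hx)

/-- The persistent sheaf Laplacian `Δ = L ∘ L† + dt ∘ dt† : V₁ → V₁`, built from
`d₁` (via `L`, the restriction of `d₁†` to `𝔹`) and a compressed map `dt`. -/
def PSL {V₀ : Submodule ℝ W₀} (d₁ : W₁ →ₗ[ℝ] W₂) (V₁ : Submodule ℝ W₁)
    (dt : V₀ →ₗ[ℝ] V₁) : V₁ →ₗ[ℝ] V₁ :=
  sheafL d₁ V₁ ∘ₗ LinearMap.adjoint (sheafL d₁ V₁) + dt ∘ₗ LinearMap.adjoint dt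

/-- Kernel of the adjoint is the orthogonal complement of the range. -/
theorem aux_ker_adjoint {E F : Type*}
    [NormedAddCommGroup E] [InnerProductSpace ℝ E] [FiniteDimensional ℝ E]
    [NormedAddCommGroup F] [InnerProductSpace ℝ F] [FiniteDimensional ℝ F]
    (f : E →ₗ[ℝ] F) :
    LinearMap.ker (LinearMap.adjoint f) = (LinearMap.range f)ᗮ := by
  ext x
  simp only [LinearMap.mem_ker, Submodule.mem_orthogonal]
  constructor
  · rintro h _ ⟨y, rfl⟩
    rw [← LinearMap.adjoint_inner_right, h, inner_zero_right]
  · intro h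
    rw [← inner_self_eq_zero (𝕜 := ℝ), LinearMap.adjoint_inner_left]
    rw [real_inner_comm]; exact h _ ⟨_, rfl⟩

/-- Kernel of `A A† + B B†` is the intersection of the kernels of the adjoints. -/
theorem aux_ker_sum {E F G : Type*}
    [NormedAddCommGroup E] [InnerProductSpace ℝ E] [FiniteDimensional ℝ E]
    [NormedAddCommGroup F] [InnerProductSpace ℝ F] [FiniteDimensional ℝ F]
    [NormedAddCommGroup G] [InnerProductSpace ℝ G] [FiniteDimensional ℝ G]
    (A : F →ₗ[ℝ] E) (B : G →ₗ[ℝ] E) :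
    LinearMap.ker (A ∘ₗ LinearMap.adjoint A + B ∘ₗ LinearMap.adjoint B) =
      LinearMap.ker (LinearMap.adjoint A) ⊓ LinearMap.ker (LinearMap.adjoint B) := by
  ext x
  simp only [LinearMap.mem_ker, Submodule.mem_inf, LinearMap.add_apply, LinearMap.comp_apply]
  constructor
  · intro h
    have h2 : ⟪x, A (LinearMap.adjoint A x)⟫ + ⟪x, B (LinearMap.adjoint B x)⟫ = 0 := by
      rw [← inner_add_right, h, inner_zero_right]
    have ha : ⟪x, A (LinearMap.adjoint A x)⟫ = ⟪LinearMap.adjoint A x, LinearMap.adjoint A x⟫ := by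
      rw [LinearMap.adjoint_inner_left]
    have hb : ⟪x, B (LinearMap.adjoint B x)⟫ = ⟪LinearMap.adjoint B x, LinearMap.adjoint B x⟫ := by
      rw [LinearMap.adjoint_inner_left]
    rw [ha, hb] at h2
    have hA0 := real_inner_self_nonneg (x := LinearMap.adjoint A x)
    have hB0 := real_inner_self_nonneg (x := LinearMap.adjoint B x)
    constructor
    · rw [← inner_self_eq_zero (𝕜 := ℝ)]; linarith
    · rw [← inner_self_eq_zero (𝕜 := ℝ)]; linarith
  · rintro ⟨h1, h2⟩
    rw [h1, h2, map_zero, map_zero, add_zero]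

theorem aux_sheafB_eq (d₁ : W₁ →ₗ[ℝ] W₂) (V₁ : Submodule ℝ W₁) :
    sheafB d₁ V₁ = (V₁ᗮ.map d₁)ᗮ := by
  ext x
  simp only [sheafB, Submodule.mem_comap]
  constructor
  · intro h
    rw [Submodule.mem_orthogonal]
    rintro _ ⟨w, hw, rfl⟩
    rw [real_inner_comm, ← LinearMap.adjoint_inner_left]
    exact Submodule.inner_right_of_mem_orthogonal h hw
  · intro h
    rw [← V₁.orthogonal_orthogonal, Submodule.mem_orthogonal]
    intro w hw
    rw [LinearMap.adjoint_inner_right]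
    exact (Submodule.mem_orthogonal _ x).mp h _ ⟨w, hw, rfl⟩

/-- The kernel of `L†` is `π(ker d₁)`. -/
theorem aux_ker_adjoint_sheafL (d₁ : W₁ →ₗ[ℝ] W₂) (V₁ : Submodule ℝ W₁) :
    LinearMap.ker (LinearMap.adjoint (sheafL d₁ V₁)) =
      (LinearMap.ker d₁).map (V₁.orthogonalProjectionOnto).toLinearMap := by
  rw [aux_ker_adjoint]
  ext v
  simp only [Submodule.mem_orthogonal, Submodule.mem_map, LinearMap.mem_ker]
  constructor
  · intro h
    -- d₁ v ∈ 𝔹ᗮ = map d₁ V₁ᗮ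
    have hmem : d₁ (v : W₁) ∈ V₁ᗮ.map d₁ := by
      rw [← (V₁ᗮ.map d₁).orthogonal_orthogonal, ← aux_sheafB_eq, Submodule.mem_orthogonal]
      rintro e he
      have := h (sheafL d₁ V₁ ⟨e, he⟩) ⟨⟨e, he⟩, rfl⟩
      have hcoe : ((sheafL d₁ V₁ ⟨e, he⟩ : V₁) : W₁) = LinearMap.adjoint d₁ e := rfl
      rw [Submodule.coe_inner, hcoe, LinearMap.adjoint_inner_left] at this
      exact this
    obtain ⟨w, hw, hdw⟩ := hmem
    refine ⟨(v : W₁) - w, ?_, ?_⟩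
    · rw [map_sub, hdw, sub_self]
    · have h1 : (V₁.orthogonalProjectionOnto).toLinearMap (v : W₁) = v :=
        Submodule.orthogonalProjectionOnto_mem_subspace_eq_self v
      have h2 : (V₁.orthogonalProjectionOnto).toLinearMap w = 0 :=
        Submodule.orthogonalProjectionOnto_apply_of_mem_orthogonal hw
      rw [map_sub, h1, h2, sub_zero]
  · rintro ⟨k, hk, rfl⟩ u ⟨e, rfl⟩
    have hcoe : ((sheafL d₁ V₁ e : V₁) : W₁) = LinearMap.adjoint d₁ (e : W₂) := rfl
    rw [Submodule.coe_inner, hcoe]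
    have : ((((V₁.orthogonalProjectionOnto).toLinearMap k) : V₁) : W₁) =
        k - (k - (V₁.orthogonalProjectionOnto k : W₁)) := by simp
    have he : LinearMap.adjoint d₁ (e : W₂) ∈ V₁ := e.2
    rw [this, inner_sub_right, LinearMap.adjoint_inner_left, hk, inner_zero_right,
      Submodule.inner_right_of_mem_orthogonal he (by exact V₁.sub_starProjection_mem_orthogonal k :
          k - (V₁.orthogonalProjectionOnto k : W₁) ∈ V₁ᗮ),
      sub_zero]

/-- the nullity of the persistent sheaf Laplacian equals the persistent
sheaf Betti number `dim π(ker d₁) − dim (range dᵗ)`. -/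
theorem finrank_ker_PSL (d₀ : W₀ →ₗ[ℝ] W₁) (d₁ : W₁ →ₗ[ℝ] W₂)
    (V₀ : Submodule ℝ W₀) (V₁ : Submodule ℝ W₁)
    (hd : d₁ ∘ₗ d₀ = 0)
    (hcompl : ∀ x ∈ V₀ᗮ, d₀ x ∈ V₁ᗮ) :
    Module.finrank ℝ (LinearMap.ker (PSL d₁ V₁ (compressedMap d₀ V₀ V₁))) =
      Module.finrank ℝ ((LinearMap.ker d₁).map (V₁.orthogonalProjectionOnto).toLinearMap)
        - Module.finrank ℝ (LinearMap.range (compressedMap d₀ V₀ V₁)) := by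
  set dt := compressedMap d₀ V₀ V₁ with hdt
  have hker : LinearMap.ker (PSL d₁ V₁ dt) =
      ((LinearMap.ker d₁).map (V₁.orthogonalProjectionOnto).toLinearMap) ⊓
        (LinearMap.range dt)ᗮ := by
    rw [PSL, aux_ker_sum, aux_ker_adjoint_sheafL, aux_ker_adjoint]
  have hle : LinearMap.range dt ≤
      (LinearMap.ker d₁).map (V₁.orthogonalProjectionOnto).toLinearMap := by
    rintro _ ⟨u, rfl⟩
    refine ⟨d₀ (u : W₀), ?_, rfl⟩
    have := LinearMap.congr_fun hd (u : W₀)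
    exact this
  have hcount := Submodule.finrank_add_inf_finrank_orthogonal hle
  rw [hker, inf_comm]
  omega
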